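/- Let (Ω, ℱ, ℙ) be a probability space and let {V(x) : x ∈ ℤ^d} be a family of nonnegative, integrable random variables. For each x set γ_x := −ln 𝔼[exp(−V(x))], and suppose there is s₀ > 0 with γ_x ≥ 2 s₀ for every x ∈ ℤ^d. For L > 0 let C_L := {x ∈ ℤ^d : |x|_∞ < L} (a finite set of cardinality |C_L|, with |C_L| asymptotically (2L)^d). Assume the product-mixing bound: there is a constant C₂ > 2^d · s₀ such that for every L > 0, |𝔼[∏_{x ∈ C_L} exp(−V(x))] − ∏_{x ∈ C_L} 𝔼[exp(−V(x))]| ≤ exp(−C₂ L^d). Then there exist γ₀ > 0 and L₀ > 0 such that for all L ≥ L₀, ℙ( (1/|C_L|) ∑_{x ∈ C_L} V(x) ≤ s₀ ) ≤ exp(−γ₀ |C_L|). -/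
import Mathlib


open MeasureTheory Finset
open scoped ProbabilityTheory

/-- The lattice cube `C_L = {x ∈ ℤ^d : |x|_∞ < L}`: for an integer `n`,
`|n| < L` iff `1 - ⌈L⌉ ≤ n ≤ ⌈L⌉ - 1`. -/
noncomputable def latticeCube (d : ℕ) (L : ℝ) : Finset (Fin d → ℤ) :=
  Finset.Icc (fun _ => 1 - ⌈L⌉) (fun _ => ⌈L⌉ - 1)

lemma card_latticeCube (d : ℕ) (L : ℝ) :
    (latticeCube d L).card = (2 * ⌈L⌉ - 1).toNat ^ d := by
  rw [latticeCube, Pi.card_Icc]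
  simp [Int.card_Icc]
  congr 1
  omega

set_option maxHeartbeats 1000000

/-- Large deviation estimate for the empirical average of a correlated
nonnegative random field under a Rosenblatt-type product-mixing bound. -/
theorem large_deviation_correlated_field
    {Ω : Type*} [MeasureSpace Ω] [IsProbabilityMeasure (ℙ : Measure Ω)]
    (d : ℕ) (hd : 1 ≤ d)
    (V : (Fin d → ℤ) → Ω → ℝ)
    (hVmeas : ∀ x, Measurable (V x))
    (hVnonneg : ∀ x ω, 0 ≤ V x ω)
    (hVint : ∀ x, Integrable (V x))
    (s₀ : ℝ) (hs₀ : 0 < s₀)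
    (hγx : ∀ x : Fin d → ℤ, 2 * s₀ ≤ -Real.log (∫ ω, Real.exp (-(V x ω))))
    (C₂ : ℝ) (hC₂ : 2 ^ d * s₀ < C₂)
    (hmix : ∀ L : ℝ, 0 < L →
      |(∫ ω, ∏ x ∈ latticeCube d L, Real.exp (-(V x ω))) -
          ∏ x ∈ latticeCube d L, ∫ ω, Real.exp (-(V x ω))| ≤ Real.exp (-C₂ * L ^ d)) :
    ∃ γ₀ > 0, ∃ L₀ > 0, ∀ L ≥ L₀,
      ℙ {ω | (1 / ((latticeCube d L).card : ℝ)) * ∑ x ∈ latticeCube d L, V x ω ≤ s₀}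
        ≤ ENNReal.ofReal (Real.exp (-γ₀ * ((latticeCube d L).card : ℝ))) := by
  have h2d : (0:ℝ) < 2 ^ d := by positivity
  set γ : ℝ := min s₀ ((C₂ / 2 ^ d - s₀) / 2) with hγdef
  have hgap : 0 < C₂ / 2 ^ d - s₀ := by
    have : s₀ < C₂ / 2 ^ d := by rw [lt_div_iff₀ h2d]; linarith
    linarith
  have hγpos : 0 < γ := lt_min hs₀ (by linarith)
  have hγle : γ ≤ s₀ := min_le_left _ _
  have hsum : (s₀ + γ) * 2 ^ d < C₂ := by
    have h1 : γ ≤ (C₂ / 2 ^ d - s₀) / 2 := min_le_right _ _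
    have h2 : s₀ + γ < C₂ / 2 ^ d := by linarith
    calc (s₀ + γ) * 2 ^ d < C₂ / 2 ^ d * 2 ^ d := by
          exact mul_lt_mul_of_pos_right h2 h2d
      _ = C₂ := by field_simp
  -- continuity: find δ such that (s₀+γ)*(2+t)^d < C₂ for |t| < δ
  have hcont : Filter.Tendsto (fun t : ℝ => (s₀ + γ) * (2 + t) ^ d) (nhds 0)
      (nhds ((s₀ + γ) * (2 + 0) ^ d)) := by
    exact (Continuous.tendsto (by continuity) 0)
  have hev : ∀ᶠ t in nhds (0:ℝ), (s₀ + γ) * (2 + t) ^ d < C₂ := by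
    refine Filter.Tendsto.eventually_lt_const ?_ hcont
    simpa using hsum
  obtain ⟨δ, hδpos, hδ⟩ := Metric.eventually_nhds_iff.mp hev
  set L₀ : ℝ := max (max 1 (2 / δ)) (2 * Real.log 2 / γ) with hL₀def
  have hL₀pos : 0 < L₀ := lt_of_lt_of_le one_pos ((le_max_left _ _).trans (le_max_left _ _))
  refine ⟨γ / 2, by positivity, L₀, hL₀pos, ?_⟩
  intro L hL
  have hL1 : 1 ≤ L := le_trans ((le_max_left _ _).trans (le_max_left _ _)) hL
  have hLpos : 0 < L := lt_of_lt_of_le one_pos hL1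
  have hLδ : 1 / L < δ := by
    have h2δ : 2 / δ ≤ L := le_trans ((le_max_right 1 _).trans (le_max_left _ _)) hL
    have h2 : 2 ≤ L * δ := (div_le_iff₀ hδpos).mp h2δ
    have : 1 / L ≤ δ / 2 := by
      rw [div_le_div_iff₀ hLpos (by positivity)]
      nlinarith
    linarith
  have hLγ : 2 * Real.log 2 / γ ≤ L := le_trans (le_max_right _ _) hL
  set C := latticeCube d L with hC
  set N := C.card with hN
  -- cardinality facts
  have hceil : (L : ℝ) ≤ (⌈L⌉ : ℝ) := Int.le_ceil L
  have hceil2 : ((⌈L⌉ : ℤ) : ℝ) < L + 1 := Int.ceil_lt_add_one L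
  have hceil1 : (1 : ℤ) ≤ ⌈L⌉ := by
    have : (0:ℤ) < ⌈L⌉ := Int.ceil_pos.mpr hLpos
    omega
  have hNcard : N = (2 * ⌈L⌉ - 1).toNat ^ d := card_latticeCube d L
  have hNR : (N : ℝ) = (2 * (⌈L⌉ : ℝ) - 1) ^ d := by
    have h0 : (((2 * ⌈L⌉ - 1).toNat : ℕ) : ℝ) = 2 * (⌈L⌉ : ℝ) - 1 := by
      rw [← Int.cast_natCast, Int.toNat_of_nonneg (by omega : (0:ℤ) ≤ 2 * ⌈L⌉ - 1)]
      push_cast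
      ring
    rw [hNcard, Nat.cast_pow, h0]
  have hm1 : (1 : ℝ) ≤ 2 * (⌈L⌉ : ℝ) - 1 := by
    have : (1:ℝ) ≤ (⌈L⌉ : ℝ) := by exact_mod_cast hceil1
    linarith
  have hNup : (N : ℝ) ≤ (2 * L + 1) ^ d := by
    rw [hNR]
    exact pow_le_pow_left₀ (by linarith) (by linarith) d
  have hNlow : L ≤ (N : ℝ) := by
    rw [hNR]
    calc L ≤ 2 * (⌈L⌉:ℝ) - 1 := by linarith
      _ ≤ (2 * (⌈L⌉:ℝ) - 1) ^ d := le_self_pow₀ hm1 (by omega)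
  have hNpos : (0:ℝ) < (N : ℝ) := lt_of_lt_of_le hLpos hNlow
  -- key inequality
  have hkey : (s₀ + γ) * (N : ℝ) ≤ C₂ * L ^ d := by
    have ht : (s₀ + γ) * (2 + 1 / L) ^ d < C₂ := by
      refine hδ ?_
      rw [Real.dist_eq, sub_zero, abs_of_pos (by positivity)]
      exact hLδ
    have hLd : (0:ℝ) < L ^ d := by positivity
    have heq : (2 + 1 / L) ^ d * L ^ d = (2 * L + 1) ^ d := by
      rw [← mul_pow]
      congr 1
      field_simp
    have h1 : (s₀ + γ) * (2 * L + 1) ^ d ≤ C₂ * L ^ d := by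
      calc (s₀ + γ) * (2 * L + 1) ^ d = (s₀ + γ) * (2 + 1 / L) ^ d * L ^ d := by
            rw [mul_assoc, heq]
        _ ≤ C₂ * L ^ d := mul_le_mul_of_nonneg_right (le_of_lt ht) (le_of_lt hLd)
    have h2 : (s₀ + γ) * (N : ℝ) ≤ (s₀ + γ) * (2 * L + 1) ^ d :=
      mul_le_mul_of_nonneg_left hNup (by linarith)
    linarith
  have hlog2 : Real.log 2 ≤ γ * (N : ℝ) / 2 := by
    have : 2 * Real.log 2 ≤ γ * L := by
      rw [div_le_iff₀ hγpos] at hLγ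
      linarith [hLγ]
    nlinarith [mul_le_mul_of_nonneg_left hNlow (le_of_lt hγpos)]
  -- analysis
  have hsmeas : Measurable fun ω => ∑ x ∈ C, V x ω :=
    Finset.measurable_sum C (fun x _ => hVmeas x)
  have hgmeas : Measurable fun ω => Real.exp (-(∑ x ∈ C, V x ω)) :=
    (Real.measurable_exp.comp hsmeas.neg)
  have hsnonneg : ∀ ω, (0:ℝ) ≤ ∑ x ∈ C, V x ω := fun ω =>
    Finset.sum_nonneg fun x _ => hVnonneg x ω
  have hintg : Integrable (fun ω => Real.exp (-(∑ x ∈ C, V x ω))) := by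
    refine Integrable.mono' (integrable_const 1) hgmeas.aestronglyMeasurable ?_
    filter_upwards with ω
    rw [Real.norm_eq_abs, abs_of_pos (Real.exp_pos _)]
    exact Real.exp_le_one_iff.mpr (neg_nonpos.mpr (hsnonneg ω))
  set I : ℝ := ∫ ω, Real.exp (-(∑ x ∈ C, V x ω)) with hI
  have hIprod : I = ∫ ω, ∏ x ∈ C, Real.exp (-(V x ω)) := by
    rw [hI]
    refine integral_congr_ae (Filter.Eventually.of_forall fun ω => ?_)
    show Real.exp (-(∑ x ∈ C, V x ω)) = ∏ x ∈ C, Real.exp (-(V x ω))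
    rw [← Real.exp_sum]
    congr 1
    rw [← Finset.sum_neg_distrib]
  -- per-site bound
  have hJ : ∀ x : Fin d → ℤ, (∫ ω, Real.exp (-(V x ω))) ≤ Real.exp (-(2 * s₀)) := by
    intro x
    rcases le_or_gt (∫ ω, Real.exp (-(V x ω))) 0 with h | h
    · exact le_trans h (le_of_lt (Real.exp_pos _))
    · have := hγx x
      have hlog : Real.log (∫ ω, Real.exp (-(V x ω))) ≤ -(2 * s₀) := by linarith
      exact (Real.log_le_iff_le_exp h).mp hlog
  have hJnn : ∀ x : Fin d → ℤ, (0:ℝ) ≤ ∫ ω, Real.exp (-(V x ω)) := fun x =>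
    integral_nonneg fun ω => le_of_lt (Real.exp_pos _)
  have hprodJ : (∏ x ∈ C, ∫ ω, Real.exp (-(V x ω))) ≤ Real.exp (-(2 * s₀) * (N:ℝ)) := by
    calc (∏ x ∈ C, ∫ ω, Real.exp (-(V x ω))) ≤ ∏ _x ∈ C, Real.exp (-(2 * s₀)) :=
          Finset.prod_le_prod (fun x _ => hJnn x) (fun x _ => hJ x)
      _ = Real.exp (-(2 * s₀)) ^ N := by rw [Finset.prod_const]
      _ = Real.exp (-(2 * s₀) * (N:ℝ)) := by
          rw [← Real.exp_nat_mul]; ring_nf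
  have hmixL := hmix L hLpos
  have hIbound : I ≤ Real.exp (-(2 * s₀) * (N:ℝ)) + Real.exp (-C₂ * L ^ d) := by
    rw [hIprod]
    have habs := abs_sub_le_iff.mp hmixL
    linarith [habs.1, hprodJ]
  -- the real inequality: I ≤ exp(-s₀N) * exp(-(γ/2)N)
  have hreal : I ≤ Real.exp (-s₀ * (N:ℝ)) * Real.exp (-(γ/2) * (N:ℝ)) := by
    rw [← Real.exp_add]
    have e1 : Real.exp (-(2 * s₀) * (N:ℝ)) ≤ Real.exp (-s₀ * (N:ℝ) + -γ * (N:ℝ)) := by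
      apply Real.exp_le_exp.mpr
      nlinarith
    have e2 : Real.exp (-C₂ * L ^ d) ≤ Real.exp (-s₀ * (N:ℝ) + -γ * (N:ℝ)) := by
      apply Real.exp_le_exp.mpr
      nlinarith
    have e3 : Real.exp (-s₀ * (N:ℝ) + -γ * (N:ℝ)) + Real.exp (-s₀ * (N:ℝ) + -γ * (N:ℝ))
        ≤ Real.exp (-s₀ * (N:ℝ) + -(γ/2) * (N:ℝ)) := by
      have : Real.exp (-s₀ * (N:ℝ) + -γ * (N:ℝ)) + Real.exp (-s₀ * (N:ℝ) + -γ * (N:ℝ))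
          = Real.exp (Real.log 2) * Real.exp (-s₀ * (N:ℝ) + -γ * (N:ℝ)) := by
        rw [Real.exp_log (by norm_num : (0:ℝ) < 2)]; ring
      rw [this, ← Real.exp_add]
      apply Real.exp_le_exp.mpr
      linarith
    linarith [hIbound]
  -- Markov
  set ε : ENNReal := ENNReal.ofReal (Real.exp (-s₀ * (N:ℝ))) with hε
  have hεpos : ε ≠ 0 := ne_of_gt (ENNReal.ofReal_pos.mpr (Real.exp_pos _))
  have hεtop : ε ≠ ⊤ := ENNReal.ofReal_ne_top
  set f : Ω → ENNReal := fun ω => ENNReal.ofReal (Real.exp (-(∑ x ∈ C, V x ω))) with hf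
  have hfmeas : AEMeasurable f ℙ := (ENNReal.measurable_ofReal.comp hgmeas).aemeasurable
  have hmark := MeasureTheory.mul_meas_ge_le_lintegral₀ hfmeas ε
  have hsub : {ω | (1 / ((latticeCube d L).card : ℝ)) * ∑ x ∈ latticeCube d L, V x ω ≤ s₀}
      ⊆ {ω | ε ≤ f ω} := by
    intro ω hω
    simp only [Set.mem_setOf_eq] at hω ⊢
    rw [hε, hf]
    apply ENNReal.ofReal_le_ofReal
    apply Real.exp_le_exp.mpr
    have hsum_le : ∑ x ∈ C, V x ω ≤ s₀ * (N:ℝ) := by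
      have := hω
      rw [one_div, inv_mul_le_iff₀ hNpos] at this
      linarith [this]
    linarith
  have hlint : ∫⁻ ω, f ω ∂ℙ = ENNReal.ofReal I := by
    rw [hI]
    exact (MeasureTheory.ofReal_integral_eq_lintegral_ofReal hintg
      (Filter.Eventually.of_forall fun ω => le_of_lt (Real.exp_pos _))).symm
  have hmain : ε * ℙ {ω | (1 / ((latticeCube d L).card : ℝ)) *
      ∑ x ∈ latticeCube d L, V x ω ≤ s₀} ≤ ε * ENNReal.ofReal (Real.exp (-(γ/2) * (N:ℝ))) := by
    calc ε * ℙ {ω | (1 / ((latticeCube d L).card : ℝ)) *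
          ∑ x ∈ latticeCube d L, V x ω ≤ s₀}
        ≤ ε * ℙ {ω | ε ≤ f ω} := by
          exact mul_le_mul_right (measure_mono hsub) ε
      _ ≤ ∫⁻ ω, f ω ∂ℙ := hmark
      _ = ENNReal.ofReal I := hlint
      _ ≤ ENNReal.ofReal (Real.exp (-s₀ * (N:ℝ)) * Real.exp (-(γ/2) * (N:ℝ))) :=
          ENNReal.ofReal_le_ofReal hreal
      _ = ε * ENNReal.ofReal (Real.exp (-(γ/2) * (N:ℝ))) := by
          rw [hε, ENNReal.ofReal_mul (le_of_lt (Real.exp_pos _))]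
  exact (ENNReal.mul_le_mul_iff_right hεpos hεtop).mp hmain
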